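/- For every nonnegative integer m, r_m(2^{m+2}) = 2(m+1) + 2 + C(m+1, 2), where C(m+1,2) is the binomial coefficient. -/

import Mathlib

/-- The integer partitioned by the binary partition `α`, where `α i` is the
number of parts equal to `2 ^ i` (so `α i` is the `α_{i+1}` of the paper). -/
def binWeight (α : ℕ →₀ ℕ) : ℕ := α.sum fun i a => a * 2 ^ i

/-- `Pm m n` is the set of binary partitions of `n` satisfying the divisibility
conditions `2 ^ (m + 2 - i) ∣ α_i` for `1 ≤ i ≤ m + 1` (written here with the
index shifted down by one).  For `n < 0` the set is empty. -/
def Pm (m : ℕ) (n : ℤ) : Set (ℕ →₀ ℕ) :=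
  {α | (binWeight α : ℤ) = n ∧ ∀ i ≤ m, 2 ^ (m + 1 - i) ∣ α i}

/-- `r m n` is the number of binary partitions of `n` satisfying the divisibility
conditions `2 ^ (m + 2 - i) ∣ α_i` for `1 ≤ i ≤ m + 1`. -/
noncomputable def r (m : ℕ) (n : ℤ) : ℕ := Nat.card (Pm m n)

namespace S14
variable (m : ℕ)

noncomputable def eB (m i : ℕ) : ℕ →₀ ℕ := Finsupp.single i (2 ^ (m + 1 - i))

noncomputable def Cf (m i : ℕ) : ℕ →₀ ℕ := Finsupp.single (m + 1) 1 + eB m i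
noncomputable def Df (m i : ℕ) : ℕ →₀ ℕ := Finsupp.single i (2 ^ (m + 2 - i))
noncomputable def Ef (m : ℕ) (s : Finset ℕ) : ℕ →₀ ℕ := ∑ i ∈ s, eB m i

noncomputable def F (m : ℕ) : Finset (ℕ →₀ ℕ) :=
  ({Finsupp.single (m + 2) 1, Finsupp.single (m + 1) 2} : Finset (ℕ →₀ ℕ))
  ∪ (Finset.range (m + 1)).image (Cf m)
  ∪ (Finset.range (m + 1)).image (Df m)
  ∪ ((Finset.range (m + 1)).powersetCard 2).image (Ef m)

lemma binWeight_single (i a : ℕ) : binWeight (Finsupp.single i a) = a * 2 ^ i :=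
  Finsupp.sum_single_index (by simp)

lemma binWeight_add (x y : ℕ →₀ ℕ) : binWeight (x + y) = binWeight x + binWeight y :=
  Finsupp.sum_add_index' (by simp) (by intros; ring)

lemma binWeight_zero : binWeight 0 = 0 := by simp [binWeight]

lemma binWeight_sum (s : Finset ℕ) (g : ℕ → ℕ →₀ ℕ) :
    binWeight (∑ i ∈ s, g i) = ∑ i ∈ s, binWeight (g i) := by
  classical
  induction s using Finset.induction_on with
  | empty => simp [binWeight]
  | insert _ _ h ih => rw [Finset.sum_insert h, Finset.sum_insert h, binWeight_add, ih]

lemma Ef_apply (s : Finset ℕ) (k : ℕ) :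
    Ef m s k = if k ∈ s then 2 ^ (m + 1 - k) else 0 := by
  classical
  rw [Ef, Finset.sum_apply']
  simp only [eB, Finsupp.single_apply]
  rw [Finset.sum_ite_eq' s k (fun i => 2 ^ (m + 1 - i))]

end S14

namespace S14

lemma sum_one {s : Finset ℕ} {f : ℕ → ℕ} (h : ∑ i ∈ s, f i = 1) :
    ∃ i ∈ s, f i = 1 ∧ ∀ j ∈ s, j ≠ i → f j = 0 := by
  classical
  obtain ⟨i, hi, hfi⟩ := Finset.exists_ne_zero_of_sum_ne_zero (by omega : ∑ i ∈ s, f i ≠ 0)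
  have hrest : f i + ∑ j ∈ s.erase i, f j = 1 := by
    rw [Finset.add_sum_erase s f hi]; exact h
  have hfi1 : f i = 1 := by omega
  have hz : ∑ j ∈ s.erase i, f j = 0 := by omega
  refine ⟨i, hi, hfi1, fun j hj hji => ?_⟩
  exact (Finset.sum_eq_zero_iff.mp hz) j (Finset.mem_erase.mpr ⟨hji, hj⟩)

lemma sum_two {s : Finset ℕ} {f : ℕ → ℕ} (h : ∑ i ∈ s, f i = 2) :
    (∃ i ∈ s, f i = 2 ∧ ∀ j ∈ s, j ≠ i → f j = 0) ∨
    (∃ i ∈ s, ∃ j ∈ s, i ≠ j ∧ f i = 1 ∧ f j = 1 ∧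
      ∀ k ∈ s, k ≠ i → k ≠ j → f k = 0) := by
  classical
  obtain ⟨i, hi, hfi⟩ := Finset.exists_ne_zero_of_sum_ne_zero (by omega : ∑ i ∈ s, f i ≠ 0)
  have hrest : f i + ∑ j ∈ s.erase i, f j = 2 := by
    rw [Finset.add_sum_erase s f hi]; exact h
  have hle : f i ≤ 2 := by omega
  rcases (by omega : f i = 2 ∨ f i = 1) with h2 | h1
  · left
    refine ⟨i, hi, h2, fun j hj hji => ?_⟩
    have hz : ∑ j ∈ s.erase i, f j = 0 := by omega
    exact (Finset.sum_eq_zero_iff.mp hz) j (Finset.mem_erase.mpr ⟨hji, hj⟩)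
  · right
    have h1' : ∑ j ∈ s.erase i, f j = 1 := by omega
    obtain ⟨j, hj, hfj, hz⟩ := sum_one h1'
    have hjs : j ∈ s := (Finset.mem_erase.mp hj).2
    have hji : j ≠ i := (Finset.mem_erase.mp hj).1
    refine ⟨i, hi, j, hjs, hji.symm, h1, hfj, fun k hk hki hkj => ?_⟩
    exact hz k (Finset.mem_erase.mpr ⟨hki, hk⟩) hkj

end S14

namespace S14

lemma mem_Pm_iff (α : ℕ →₀ ℕ) :
    α ∈ Pm m (2 ^ (m + 2)) ↔
      binWeight α = 2 ^ (m + 2) ∧ ∀ i ≤ m, 2 ^ (m + 1 - i) ∣ α i := by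
  constructor
  · rintro ⟨h1, h2⟩
    exact ⟨by exact_mod_cast h1, h2⟩
  · rintro ⟨h1, h2⟩
    exact ⟨by exact_mod_cast h1, h2⟩

lemma F_subset : ∀ α ∈ F m, α ∈ Pm m (2 ^ (m + 2)) := by
  classical
  intro α hα
  rw [mem_Pm_iff]
  simp only [F, Finset.mem_union, Finset.mem_image, Finset.mem_insert,
    Finset.mem_singleton, Finset.mem_range, Finset.mem_powersetCard] at hα
  rcases hα with (((hA | hB) | ⟨i, hi, rfl⟩) | ⟨i, hi, rfl⟩) | ⟨s, ⟨hs, hcard⟩, rfl⟩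
  · subst hA
    constructor
    · rw [binWeight_single]; ring
    · intro i hi
      rw [Finsupp.single_apply, if_neg (by omega)]
      exact dvd_zero _
  · subst hB
    constructor
    · rw [binWeight_single]; ring
    · intro i hi
      rw [Finsupp.single_apply, if_neg (by omega)]
      exact dvd_zero _
  · constructor
    · rw [Cf, binWeight_add, binWeight_single, eB, binWeight_single,
        one_mul, pow_sub_mul_pow 2 (by omega : i ≤ m + 1)]
      ring
    · intro j hj
      rw [Cf, Finsupp.add_apply, Finsupp.single_apply, if_neg (by omega), zero_add,
        eB, Finsupp.single_apply]
      split_ifs with h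
      · subst h; exact dvd_rfl
      · exact dvd_zero _
  · constructor
    · rw [Df, binWeight_single, pow_sub_mul_pow 2 (by omega : i ≤ m + 2)]
    · intro j hj
      rw [Df, Finsupp.single_apply]
      split_ifs with h
      · subst h
        exact pow_dvd_pow 2 (by omega)
      · exact dvd_zero _
  · constructor
    · rw [Ef, binWeight_sum]
      have : ∀ i ∈ s, binWeight (eB m i) = 2 ^ (m + 1) := by
        intro i hi
        have him : i < m + 1 := Finset.mem_range.mp (hs hi)
        rw [eB, binWeight_single, pow_sub_mul_pow 2 (by omega : i ≤ m + 1)]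
      calc (∑ i ∈ s, binWeight (eB m i))
          = ∑ i ∈ s, 2 ^ (m + 1) := Finset.sum_congr rfl this
        _ = 2 ^ (m + 2) := by rw [Finset.sum_const, hcard]; ring
    · intro j hj
      rw [Ef_apply]
      split_ifs with h
      · exact dvd_rfl
      · exact dvd_zero _

end S14

namespace S14

lemma subset_F : ∀ α ∈ Pm m (2 ^ (m + 2)), α ∈ F m := by
  classical
  intro α hα
  rw [mem_Pm_iff] at hα
  obtain ⟨h1, h2⟩ := hα
  -- each term bounded by the total
  have hterm : ∀ i, α i * 2 ^ i ≤ 2 ^ (m + 2) := by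
    intro i
    rcases eq_or_ne (α i) 0 with h | h
    · simp [h]
    · have hi : i ∈ α.support := Finsupp.mem_support_iff.mpr h
      calc α i * 2 ^ i ≤ α.sum fun j a => a * 2 ^ j :=
            Finset.single_le_sum (f := fun j => α j * 2 ^ j) (fun j _ => Nat.zero_le _) hi
        _ = 2 ^ (m + 2) := h1
  have hbig : ∀ i, m + 3 ≤ i → α i = 0 := by
    intro i hi
    by_contra h
    have h1le : 1 ≤ α i := Nat.one_le_iff_ne_zero.mpr h
    have ht := hterm i
    have h2i : 2 ^ (m + 3) ≤ 2 ^ i := Nat.pow_le_pow_right (by norm_num) hi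
    have hle : 2 ^ i ≤ α i * 2 ^ i := Nat.le_mul_of_pos_left _ (by omega)
    have h23 : 2 ^ (m + 2) < 2 ^ (m + 3) := Nat.pow_lt_pow_right (by norm_num) (by omega)
    omega
  have hsupp : α.support ⊆ Finset.range (m + 3) := by
    intro i hi
    rw [Finset.mem_range]
    by_contra h
    exact Finsupp.mem_support_iff.mp hi (hbig i (by omega))
  have hsum : ∑ i ∈ Finset.range (m + 3), α i * 2 ^ i = 2 ^ (m + 2) := by
    have he := Finsupp.sum_of_support_subset α hsupp (fun i a => a * 2 ^ i)
      (fun i _ => by simp)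
    rw [binWeight, he] at h1
    exact h1
  rw [Finset.sum_range_succ, Finset.sum_range_succ] at hsum
  -- β values
  set β : ℕ → ℕ := fun i => α i / 2 ^ (m + 1 - i) with hβ
  have hαβ : ∀ i ≤ m, α i = 2 ^ (m + 1 - i) * β i := fun i hi =>
    (Nat.mul_div_cancel' (h2 i hi)).symm
  have hsum2 : ∀ i ∈ Finset.range (m + 1), α i * 2 ^ i = β i * 2 ^ (m + 1) := by
    intro i hi
    have him : i ≤ m := by rw [Finset.mem_range] at hi; omega
    rw [hαβ i him, mul_comm (2 ^ (m + 1 - i)) (β i), mul_assoc,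
      pow_sub_mul_pow 2 (by omega : i ≤ m + 1)]
  rw [Finset.sum_congr rfl hsum2, ← Finset.sum_mul] at hsum
  set S := ∑ i ∈ Finset.range (m + 1), β i with hS
  have keq : S + α (m + 1) + 2 * α (m + 2) = 2 := by
    have : (S + α (m + 1) + 2 * α (m + 2)) * 2 ^ (m + 1) = 2 * 2 ^ (m + 1) := by
      rw [add_mul, add_mul]
      have e2 : 2 ^ (m + 2) = 2 * 2 ^ (m + 1) := by ring
      rw [e2] at hsum
      nlinarith [hsum]
    exact Nat.eq_of_mul_eq_mul_right (by positivity) this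
  have memA : Finsupp.single (m + 2) 1 ∈ F m := by
    simp [F]
  have memB : Finsupp.single (m + 1) 2 ∈ F m := by
    simp [F]
  have memC : ∀ i < m + 1, Cf m i ∈ F m := by
    intro i hi
    simp only [F, Finset.mem_union]
    exact Or.inl (Or.inl (Or.inr (Finset.mem_image.mpr ⟨i, Finset.mem_range.mpr hi, rfl⟩)))
  have memD : ∀ i < m + 1, Df m i ∈ F m := by
    intro i hi
    simp only [F, Finset.mem_union]
    exact Or.inl (Or.inr (Finset.mem_image.mpr ⟨i, Finset.mem_range.mpr hi, rfl⟩))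
  have memE : ∀ s : Finset ℕ, s ⊆ Finset.range (m + 1) → s.card = 2 → Ef m s ∈ F m := by
    intro s hs hc
    simp only [F, Finset.mem_union]
    exact Or.inr (Finset.mem_image.mpr ⟨s, Finset.mem_powersetCard.mpr ⟨hs, hc⟩, rfl⟩)
  have hm2le : α (m + 2) ≤ 1 := by omega
  rcases (by omega : α (m + 2) = 1 ∨ α (m + 2) = 0) with hm2 | hm2
  · -- α = single (m+2) 1
    have hS0 : S = 0 := by omega
    have hm1 : α (m + 1) = 0 := by omega
    have hz : ∀ i ≤ m, α i = 0 := by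
      intro i hi
      rw [hαβ i hi, Finset.sum_eq_zero_iff.mp hS0.symm.symm i (Finset.mem_range.mpr (by omega))]
      ring
    have : α = Finsupp.single (m + 2) 1 := by
      ext k
      rw [Finsupp.single_apply]
      split_ifs with h
      · subst h; omega
      · rcases (by omega : k ≤ m ∨ k = m + 1 ∨ m + 3 ≤ k) with h' | h' | h'
        · exact hz k h'
        · subst h'; omega
        · exact hbig k h'
    rw [this]; exact memA
  rcases (by omega : α (m + 1) = 2 ∨ α (m + 1) = 1 ∨ α (m + 1) = 0) with hm1 | hm1 | hm1
  · -- α = single (m+1) 2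
    have hS0 : S = 0 := by omega
    have hz : ∀ i ≤ m, α i = 0 := by
      intro i hi
      rw [hαβ i hi, Finset.sum_eq_zero_iff.mp hS0.symm.symm i (Finset.mem_range.mpr (by omega))]
      ring
    have : α = Finsupp.single (m + 1) 2 := by
      ext k
      rw [Finsupp.single_apply]
      split_ifs with h
      · subst h; omega
      · rcases (by omega : k ≤ m ∨ k = m + 2 ∨ m + 3 ≤ k) with h' | h' | h'
        · exact hz k h'
        · subst h'; omega
        · exact hbig k h'
    rw [this]; exact memB
  · -- α = Cf m i
    have hS1 : S = 1 := by omega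
    obtain ⟨i, hi, hβ1, hβz⟩ := sum_one hS1.symm.symm
    have him : i < m + 1 := Finset.mem_range.mp hi
    have hαi : α i = 2 ^ (m + 1 - i) := by
      rw [hαβ i (by omega), hβ1]; ring
    have hz : ∀ j ≤ m, j ≠ i → α j = 0 := by
      intro j hj hji
      rw [hαβ j hj, hβz j (Finset.mem_range.mpr (by omega)) hji]
      ring
    have : α = Cf m i := by
      ext k
      rw [Cf, eB, Finsupp.add_apply, Finsupp.single_apply, Finsupp.single_apply]
      split_ifs with ha hb hb
      · omega
      · subst ha; omega
      · subst hb; omega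
      · rcases (by omega : (k ≤ m ∧ k ≠ i) ∨ k = m + 2 ∨ m + 3 ≤ k) with h' | h' | h'
        · rw [hz k h'.1 h'.2]; ring
        · subst h'; omega
        · rw [hbig k h']; ring
    rw [this]; exact memC i him
  · -- S = 2
    have hS2 : S = 2 := by omega
    rcases sum_two hS2.symm.symm with ⟨i, hi, hβ2, hβz⟩ | ⟨i, hi, j, hj, hij, hβi, hβj, hβz⟩
    · have him : i < m + 1 := Finset.mem_range.mp hi
      have hαi : α i = 2 ^ (m + 2 - i) := by
        rw [hαβ i (by omega), hβ2, show m + 2 - i = (m + 1 - i) + 1 by omega, pow_succ]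
      have hz : ∀ j ≤ m, j ≠ i → α j = 0 := by
        intro j hj hji
        rw [hαβ j hj, hβz j (Finset.mem_range.mpr (by omega)) hji]
        ring
      have : α = Df m i := by
        ext k
        rw [Df, Finsupp.single_apply]
        split_ifs with h
        · subst h; omega
        · rcases (by omega : (k ≤ m ∧ k ≠ i) ∨ k = m + 1 ∨ k = m + 2 ∨ m + 3 ≤ k)
            with h' | h' | h' | h'
          · exact hz k h'.1 h'.2
          · subst h'; omega
          · subst h'; omega
          · exact hbig k h'
      rw [this]; exact memD i him
    · have him : i < m + 1 := Finset.mem_range.mp hi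
      have hjm : j < m + 1 := Finset.mem_range.mp hj
      have hαi : α i = 2 ^ (m + 1 - i) := by rw [hαβ i (by omega), hβi]; ring
      have hαj : α j = 2 ^ (m + 1 - j) := by rw [hαβ j (by omega), hβj]; ring
      have hz : ∀ k ≤ m, k ≠ i → k ≠ j → α k = 0 := by
        intro k hk hki hkj
        rw [hαβ k hk, hβz k (Finset.mem_range.mpr (by omega)) hki hkj]
        ring
      have hsub : ({i, j} : Finset ℕ) ⊆ Finset.range (m + 1) := by
        intro k hk
        simp only [Finset.mem_insert, Finset.mem_singleton] at hk
        rcases hk with rfl | rfl <;> simp [Finset.mem_range, him, hjm]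
      have hc2 : ({i, j} : Finset ℕ).card = 2 := by
        rw [Finset.card_insert_of_notMem (by simp [hij]), Finset.card_singleton]
      have : α = Ef m {i, j} := by
        ext k
        rw [Ef_apply]
        split_ifs with h
        · simp only [Finset.mem_insert, Finset.mem_singleton] at h
          rcases h with rfl | rfl
          · exact hαi
          · exact hαj
        · simp only [Finset.mem_insert, Finset.mem_singleton, not_or] at h
          rcases (by omega : k ≤ m ∨ k = m + 1 ∨ k = m + 2 ∨ m + 3 ≤ k)
            with h' | h' | h' | h'
          · exact hz k h' h.1 h.2
          · subst h'; omega
          · subst h'; omega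
          · exact hbig k h'
      rw [this]; exact memE _ hsub hc2

end S14

namespace S14

variable (m : ℕ)

lemma Cf_top (i : ℕ) (hi : i < m + 1) : Cf m i (m + 1) = 1 := by
  rw [Cf, Finsupp.add_apply, eB, Finsupp.single_apply, Finsupp.single_apply,
    if_pos rfl, if_neg (by omega : ¬ i = m + 1)]
  ring

lemma Df_top (i : ℕ) (hi : i < m + 1) : Df m i (m + 1) = 0 := by
  rw [Df, Finsupp.single_apply, if_neg (by omega)]

lemma Df_top2 (i : ℕ) (hi : i < m + 1) : Df m i (m + 2) = 0 := by
  rw [Df, Finsupp.single_apply, if_neg (by omega)]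

lemma Ef_top (s : Finset ℕ) (hs : s ⊆ Finset.range (m + 1)) : Ef m s (m + 1) = 0 := by
  rw [Ef_apply, if_neg]
  intro h
  have := Finset.mem_range.mp (hs h)
  omega

lemma Df_support (i : ℕ) : (Df m i).support = {i} :=
  Finsupp.support_single_ne_zero _ (pow_ne_zero _ two_ne_zero)

lemma Ef_support (s : Finset ℕ) : (Ef m s).support = s := by
  ext k
  rw [Finsupp.mem_support_iff, Ef_apply]
  split_ifs with h
  · simp [h, pow_ne_zero]
  · simp [h]

lemma card_F : (F m).card = 2 * (m + 1) + 2 + (m + 1).choose 2 := by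
  classical
  have c1 : ({Finsupp.single (m + 2) 1, Finsupp.single (m + 1) 2} : Finset (ℕ →₀ ℕ)).card = 2 := by
    rw [Finset.card_insert_of_notMem, Finset.card_singleton]
    intro h
    rw [Finset.mem_singleton] at h
    have := DFunLike.congr_fun h (m + 2)
    simp [Finsupp.single_apply, (by omega : ¬ m + 1 = m + 2)] at this
  have c2 : ((Finset.range (m + 1)).image (Cf m)).card = m + 1 := by
    rw [Finset.card_image_of_injOn, Finset.card_range]
    intro i hi j hj hij
    rw [Finset.coe_range, Set.mem_Iio] at hi hj
    by_contra hne
    have := DFunLike.congr_fun hij i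
    simp only [Cf, eB, Finsupp.add_apply, Finsupp.single_apply] at this
    simp only [if_neg (show ¬ m + 1 = i by omega), if_pos rfl,
      if_neg (show ¬ j = i from fun h => hne h.symm), zero_add] at this
    exact pow_ne_zero _ two_ne_zero this
  have c3 : ((Finset.range (m + 1)).image (Df m)).card = m + 1 := by
    rw [Finset.card_image_of_injOn, Finset.card_range]
    intro i hi j hj hij
    have := congrArg Finsupp.support hij
    rw [Df_support, Df_support] at this
    exact Finset.singleton_injective this
  have c4 : (((Finset.range (m + 1)).powersetCard 2).image (Ef m)).card = (m + 1).choose 2 := by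
    rw [Finset.card_image_of_injOn, Finset.card_powersetCard, Finset.card_range]
    intro s hs t ht hst
    have := congrArg Finsupp.support hst
    rwa [Ef_support, Ef_support] at this
  have d1 : Disjoint ({Finsupp.single (m + 2) 1, Finsupp.single (m + 1) 2} : Finset (ℕ →₀ ℕ))
      ((Finset.range (m + 1)).image (Cf m)) := by
    rw [Finset.disjoint_left]
    intro x hx hx'
    obtain ⟨i, hi, rfl⟩ := Finset.mem_image.mp hx'
    have hi' := Finset.mem_range.mp hi
    have h1 := Cf_top m i hi'
    rcases Finset.mem_insert.mp hx with h | h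
    · have := DFunLike.congr_fun h (m + 1)
      rw [Finsupp.single_apply, if_neg (by omega)] at this
      omega
    · rw [Finset.mem_singleton] at h
      have := DFunLike.congr_fun h (m + 1)
      rw [Finsupp.single_apply, if_pos rfl] at this
      omega
  have d2 : Disjoint (({Finsupp.single (m + 2) 1, Finsupp.single (m + 1) 2} : Finset (ℕ →₀ ℕ))
      ∪ (Finset.range (m + 1)).image (Cf m)) ((Finset.range (m + 1)).image (Df m)) := by
    rw [Finset.disjoint_left]
    intro x hx hx'
    obtain ⟨i, hi, rfl⟩ := Finset.mem_image.mp hx'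
    have hi' := Finset.mem_range.mp hi
    have h1 := Df_top m i hi'
    have h2 := Df_top2 m i hi'
    rcases Finset.mem_union.mp hx with h | h
    · rcases Finset.mem_insert.mp h with h | h
      · have := DFunLike.congr_fun h (m + 2)
        rw [Finsupp.single_apply, if_pos rfl] at this
        omega
      · rw [Finset.mem_singleton] at h
        have := DFunLike.congr_fun h (m + 1)
        rw [Finsupp.single_apply, if_pos rfl] at this
        omega
    · obtain ⟨j, hj, h⟩ := Finset.mem_image.mp h
      have hj' := Finset.mem_range.mp hj
      have := Cf_top m j hj'
      rw [h] at this
      omega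
  have d3 : Disjoint ((({Finsupp.single (m + 2) 1, Finsupp.single (m + 1) 2} : Finset (ℕ →₀ ℕ))
      ∪ (Finset.range (m + 1)).image (Cf m)) ∪ (Finset.range (m + 1)).image (Df m))
      (((Finset.range (m + 1)).powersetCard 2).image (Ef m)) := by
    rw [Finset.disjoint_left]
    intro x hx hx'
    obtain ⟨s, hs, rfl⟩ := Finset.mem_image.mp hx'
    obtain ⟨hs1, hs2⟩ := Finset.mem_powersetCard.mp hs
    have h1 := Ef_top m s hs1
    have hsc : (Ef m s).support.card = 2 := by rw [Ef_support]; exact hs2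
    rcases Finset.mem_union.mp hx with h | h
    · rcases Finset.mem_union.mp h with h | h
      · rcases Finset.mem_insert.mp h with h | h
        · have h2 : s.card = (Finsupp.single (m + 2) (1 : ℕ)).support.card := by
            rw [← Ef_support m s, h]
          rw [Finsupp.support_single_ne_zero _ one_ne_zero, Finset.card_singleton] at h2
          omega
        · rw [Finset.mem_singleton] at h
          have := DFunLike.congr_fun h (m + 1)
          rw [Finsupp.single_apply, if_pos rfl] at this
          omega
      · obtain ⟨j, hj, h⟩ := Finset.mem_image.mp h
        have hj' := Finset.mem_range.mp hj
        have := Cf_top m j hj'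
        rw [h] at this
        omega
    · obtain ⟨j, hj, h⟩ := Finset.mem_image.mp h
      have h2 : s.card = ({j} : Finset ℕ).card := by
        rw [← Ef_support m s, ← h, Df_support]
      rw [Finset.card_singleton] at h2
      omega
  rw [F, Finset.card_union_of_disjoint d3, Finset.card_union_of_disjoint d2,
    Finset.card_union_of_disjoint d1, c1, c2, c3, c4]
  ring

end S14

theorem stmt14 (m : ℕ) : r m (2 ^ (m + 2)) = 2 * (m + 1) + 2 + (m + 1).choose 2 := by
  have hset : Pm m (2 ^ (m + 2)) = ↑(S14.F m) := by
    ext α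
    constructor
    · exact fun h => S14.subset_F α h
    · exact fun h => S14.F_subset α h
  rw [r, hset, Nat.card_coe_set_eq, Set.ncard_coe_finset, S14.card_F]
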